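/- For a row vector v ∈ ℝⁿ and indices i₁ < … < i_r, the determinant of the matrix whose columns are e_j + v_j·vᵀ for j ∉ {i₁,…,i_r} and e_{i_k} for the remaining columns equals 1 + Σ_{m∉{i₁,…,i_r}} v_m². -/
import Mathlib

open Matrix

/-- The determinant of the matrix whose `j`-th column is `e_j + v_j vᵀ` for `j ∉ s`
and `e_j` for `j ∈ s` equals `1 + Σ_{m∉s} v_m²`. -/
theorem det_columns_replaced (n r : ℕ) (v : Fin n → ℝ) (s : Finset (Fin n))
    (hs : s.card = r) :
    (Matrix.det fun i j =>
        if j ∈ s then (if i = j then (1 : ℝ) else 0)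
        else (if i = j then (1 : ℝ) else 0) + v j * v i) =
      1 + ∑ m ∈ Finset.univ \ s, (v m) ^ 2 := by
  have h := Matrix.det_one_add_replicateCol_mul_replicateRow (ι := Unit) v
    (fun j => if j ∈ s then 0 else v j)
  have heq : (1 + Matrix.replicateCol Unit v * Matrix.replicateRow Unit (fun j => if j ∈ s then 0 else v j))
      = Matrix.of fun i j =>
        if j ∈ s then (if i = j then (1 : ℝ) else 0)
        else (if i = j then (1 : ℝ) else 0) + v j * v i := by
    ext i j
    by_cases hj : j ∈ s <;>
      simp [hj, Matrix.add_apply, Matrix.one_apply, Matrix.mul_apply, Matrix.of_apply,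
        Fintype.sum_unique, mul_comm]
  rw [heq] at h
  rw [show (fun i j => if j ∈ s then (if i = j then (1:ℝ) else 0)
      else (if i = j then (1:ℝ) else 0) + v j * v i) = Matrix.of fun i j =>
        if j ∈ s then (if i = j then (1:ℝ) else 0)
        else (if i = j then (1:ℝ) else 0) + v j * v i from rfl, h, dotProduct]
  congr 1
  simp only [ite_mul, zero_mul]
  rw [Finset.sum_ite, Finset.sum_const_zero, zero_add]
  apply Finset.sum_congr
  · ext x; simp
  · intro x _; ring
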